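/- Let f : ℝⁿ → ℝ be convex with a local minimizer at x̄ and suppose there are c > 0, ε > 0, α ≥ 1 with m_f(x) ≥ c‖x - x̄‖^{α-1} for all 0 < ‖x - x̄‖ ≤ ε, where m_f(x) is the minimal norm of (convex) subgradients. Then there exist c' > 0 and ε' > 0 with f(x) ≥ f(x̄) + c'‖x - x̄‖^{α} for all ‖x - x̄‖ ≤ ε'. -/

import Mathlib

noncomputable section
/-- The convex subdifferential of `f` at `x`. -/
def convexSubdiff {n : ℕ} (f : EuclideanSpace ℝ (Fin n) → ℝ) (x : EuclideanSpace ℝ (Fin n)) :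
    Set (EuclideanSpace ℝ (Fin n)) :=
  {v | ∀ y, f x + (inner ℝ v (y - x) : ℝ) ≤ f y}

/-- Minimal norm of convex subgradients. -/
def mfConvex {n : ℕ} (f : EuclideanSpace ℝ (Fin n) → ℝ) (x : EuclideanSpace ℝ (Fin n)) : ℝ :=
  sInf (norm '' convexSubdiff f x)

-- key subgradient extraction lemma
lemma subgrad_of_min {n : ℕ} (f : EuclideanSpace ℝ (Fin n) → ℝ)
    (hconv : ConvexOn ℝ Set.univ f) (x z : EuclideanSpace ℝ (Fin n)) (lam ρ : ℝ)
    (hlam : 0 < lam) (hz : ‖z - x‖ < ρ)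
    (hmin : ∀ y, ‖y - x‖ ≤ ρ → f z + lam * ‖z - x‖ ^ 2 ≤ f y + lam * ‖y - x‖ ^ 2) :
    ∀ y, f z + (inner ℝ ((2 * lam) • (x - z)) (y - z) : ℝ) ≤ f y := by
  intro y
  have hinner : (inner ℝ ((2 * lam) • (x - z)) (y - z) : ℝ)
      = -(2 * lam * (inner ℝ (z - x) (y - z) : ℝ)) := by
    rw [real_inner_smul_left, ← neg_sub z x, inner_neg_left]; ring
  rw [hinner]
  have hb : (0:ℝ) ≤ lam * ‖y - z‖ ^ 2 := by positivity
  have key : ∀ δ > (0:ℝ),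
      f z - (f y + 2 * lam * (inner ℝ (z - x) (y - z) : ℝ)) ≤ 0 + δ := by
    intro δ hδ
    set b := lam * ‖y - z‖ ^ 2 with hbdef
    have hgap : 0 < ρ - ‖z - x‖ := by linarith
    set t : ℝ := min (min 1 ((ρ - ‖z - x‖) / (‖y - z‖ + 1))) (δ / (b + 1)) with ht
    have hyz1 : (0:ℝ) < ‖y - z‖ + 1 := by positivity
    have ht0 : 0 < t := by
      apply lt_min (lt_min one_pos (by positivity)); positivity
    have ht1 : t ≤ 1 := le_trans (min_le_left _ _) (min_le_left _ _)
    have htρ : t * ‖y - z‖ ≤ ρ - ‖z - x‖ := by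
      have h1 : t ≤ (ρ - ‖z - x‖) / (‖y - z‖ + 1) :=
        le_trans (min_le_left _ _) (min_le_right _ _)
      have h2 : t * ‖y - z‖ ≤ (ρ - ‖z - x‖) / (‖y - z‖ + 1) * ‖y - z‖ :=
        mul_le_mul_of_nonneg_right h1 (norm_nonneg _)
      have h3 : (ρ - ‖z - x‖) / (‖y - z‖ + 1) * ‖y - z‖ ≤ ρ - ‖z - x‖ := by
        rw [div_mul_eq_mul_div, div_le_iff₀ hyz1]
        nlinarith [norm_nonneg (y - z)]
      linarith
    have htδ : t * b ≤ δ := by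
      have h1 : t ≤ δ / (b + 1) := min_le_right _ _
      have h2 : t * b ≤ δ / (b + 1) * b := mul_le_mul_of_nonneg_right h1 hb
      have h3 : δ / (b + 1) * b ≤ δ := by
        rw [div_mul_eq_mul_div, div_le_iff₀ (by linarith)]
        nlinarith
      linarith
    -- the point z + t • (y - z)
    have hmem : ‖(z + t • (y - z)) - x‖ ≤ ρ := by
      have : (z + t • (y - z)) - x = (z - x) + t • (y - z) := by abel
      rw [this]
      calc ‖(z - x) + t • (y - z)‖ ≤ ‖z - x‖ + ‖t • (y - z)‖ := norm_add_le _ _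
        _ = ‖z - x‖ + t * ‖y - z‖ := by
            rw [norm_smul, Real.norm_eq_abs, abs_of_pos ht0]
        _ ≤ ρ := by linarith
    have hA := hmin (z + t • (y - z)) hmem
    have hcvx := hconv.2 (Set.mem_univ z) (Set.mem_univ y)
      (by linarith : (0:ℝ) ≤ 1 - t) (le_of_lt ht0) (by ring)
    have hpt : (1 - t) • z + t • y = z + t • (y - z) := by
      rw [smul_sub, sub_smul, one_smul]; abel
    rw [hpt] at hcvx
    have hexp : ‖(z + t • (y - z)) - x‖ ^ 2
        = ‖z - x‖ ^ 2 + 2 * t * (inner ℝ (z - x) (y - z) : ℝ) + t ^ 2 * ‖y - z‖ ^ 2 := by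
      have e1 : (z + t • (y - z)) - x = (z - x) + t • (y - z) := by abel
      rw [e1, norm_add_sq_real, real_inner_smul_right, norm_smul, Real.norm_eq_abs,
        abs_of_pos ht0, mul_pow]
      ring
    rw [hexp] at hA
    -- combine: 0 ≤ t*(f y - f z) + 2*t*lam*inner + t^2 * b
    have hcomb : 0 ≤ t * (f y - f z) + 2 * t * lam * (inner ℝ (z - x) (y - z) : ℝ)
        + t ^ 2 * b := by
      simp only [smul_eq_mul] at hcvx
      nlinarith [hA, hcvx, hbdef]
    have hdiv : 0 ≤ (f y - f z) + 2 * lam * (inner ℝ (z - x) (y - z) : ℝ) + t * b := by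
      have := mul_le_mul_of_nonneg_left hcomb (le_of_lt (inv_pos.mpr ht0))
      have ht0' : t ≠ 0 := ne_of_gt ht0
      nlinarith [hcomb, ht0]
    linarith
  have := le_of_forall_pos_le_add key
  linarith


set_option maxHeartbeats 1000000 in
theorem stmt17 {n : ℕ} (f : EuclideanSpace ℝ (Fin n) → ℝ)
    (hconv : ConvexOn ℝ Set.univ f)
    (x₀ : EuclideanSpace ℝ (Fin n)) (hmin : IsLocalMin f x₀)
    (c ε α : ℝ) (hc : 0 < c) (hε : 0 < ε) (hα : 1 ≤ α)
    (h : ∀ x, 0 < ‖x - x₀‖ → ‖x - x₀‖ ≤ ε → mfConvex f x ≥ c * ‖x - x₀‖ ^ (α - 1)) :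
    ∃ c' > (0:ℝ), ∃ ε' > (0:ℝ), ∀ x, ‖x - x₀‖ ≤ ε' →
      f x ≥ f x₀ + c' * ‖x - x₀‖ ^ α := by
  have hglob : ∀ y, f x₀ ≤ f y := IsMinOn.of_isLocalMin_of_convex_univ hmin hconv
  have hcont : Continuous f := by
    rw [← continuousOn_univ]; exact hconv.continuousOn isOpen_univ
  have h2 : (0:ℝ) < (2:ℝ) ^ (α - 1) := Real.rpow_pos_of_pos two_pos _
  refine ⟨c / (6 * (2:ℝ) ^ (α - 1)), by positivity, 2 * ε / 3, by positivity, ?_⟩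
  intro x hx
  rcases eq_or_lt_of_le (norm_nonneg (x - x₀)) with hr0 | hrpos
  · have hxeq : x = x₀ := by
      rw [← sub_eq_zero]; exact norm_eq_zero.mp hr0.symm
    rw [hxeq]
    simp [Real.zero_rpow (by positivity : α ≠ 0)]
  set r := ‖x - x₀‖ with hrdef
  have hrε : r ≤ ε := by linarith
  have hΔ0 : 0 ≤ f x - f x₀ := sub_nonneg.mpr (hglob x)
  rcases eq_or_lt_of_le hΔ0 with hΔz | hΔpos
  · exfalso
    have h0mem : (0 : EuclideanSpace ℝ (Fin n)) ∈ convexSubdiff f x := by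
      simp only [convexSubdiff, Set.mem_setOf_eq]
      intro y
      rw [inner_zero_left]
      have := hglob y
      linarith [hΔz.symm.le]
    have hbdd : BddBelow (norm '' convexSubdiff f x) :=
      ⟨0, by rintro a ⟨v, -, rfl⟩; exact norm_nonneg v⟩
    have hle : mfConvex f x ≤ 0 := by
      have hmem : (0:ℝ) ∈ norm '' convexSubdiff f x := ⟨0, h0mem, norm_zero⟩
      unfold mfConvex
      exact csInf_le hbdd hmem
    have hge := h x hrpos hrε
    have hpos : (0:ℝ) < c * r ^ (α - 1) :=
      mul_pos hc (Real.rpow_pos_of_pos hrpos _)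
    linarith
  · set Δ := f x - f x₀ with hΔdef
    set lam := 8 * Δ / r ^ 2 with hlamdef
    have hlam0 : 0 < lam := by positivity
    have hcφ : Continuous fun y : EuclideanSpace ℝ (Fin n) => f y + lam * ‖y - x‖ ^ 2 := by
      exact hcont.add (continuous_const.mul (((continuous_id.sub continuous_const).norm).pow 2))
    obtain ⟨z, hzmem, hzmin⟩ := (isCompact_closedBall x (r/2)).exists_isMinOn
      (Metric.nonempty_closedBall.mpr (by positivity)) hcφ.continuousOn
    have hzmin' : ∀ y, ‖y - x‖ ≤ r/2 → f z + lam * ‖z - x‖^2 ≤ f y + lam * ‖y - x‖^2 := by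
      intro y hy
      exact hzmin (by simpa [Metric.mem_closedBall, dist_eq_norm] using hy)
    have hφx : f z + lam * ‖z - x‖ ^ 2 ≤ f x := by
      have hx' := hzmin' x (by simpa using (by positivity : (0:ℝ) ≤ r/2))
      simpa using hx'
    have hzx2 : lam * ‖z - x‖ ^ 2 ≤ Δ := by
      have := hglob z; rw [hΔdef]; linarith
    have hzx2' : ‖z - x‖ ^ 2 ≤ r ^ 2 / 8 := by
      rw [hlamdef, div_mul_eq_mul_div, div_le_iff₀ (by positivity)] at hzx2
      nlinarith
    have hzxlt : ‖z - x‖ < r / 2 := by nlinarith [norm_nonneg (z - x)]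
    have hv := subgrad_of_min f hconv x z lam (r/2) hlam0 hzxlt hzmin'
    set v := (2 * lam) • (x - z) with hvdef
    have hvmem : v ∈ convexSubdiff f z := by
      simp only [convexSubdiff, Set.mem_setOf_eq]
      exact hv
    have hxz : ‖x - z‖ = ‖z - x‖ := norm_sub_rev x z
    have hvnorm : ‖v‖ = 2 * lam * ‖z - x‖ := by
      rw [hvdef, norm_smul, Real.norm_eq_abs, abs_of_pos (by linarith), hxz]
    have hq38 : ‖z - x‖ ≤ 3 * r / 8 := by nlinarith [norm_nonneg (z - x)]
    have hvbound : ‖v‖ ≤ 6 * Δ / r := by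
      rw [hvnorm, hlamdef,
        show 2 * (8 * Δ / r ^ 2) * ‖z - x‖ = 16 * Δ * ‖z - x‖ / r ^ 2 by ring,
        div_le_div_iff₀ (by positivity) hrpos]
      nlinarith [mul_le_mul_of_nonneg_left hq38 (by positivity : (0:ℝ) ≤ 16 * Δ * r)]
    have htri1 : ‖x - x₀‖ ≤ ‖x - z‖ + ‖z - x₀‖ := norm_sub_le_norm_sub_add_norm_sub _ _ _
    have htri2 : ‖z - x₀‖ ≤ ‖z - x‖ + ‖x - x₀‖ := norm_sub_le_norm_sub_add_norm_sub _ _ _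
    have hs1 : r/2 ≤ ‖z - x₀‖ := by
      rw [hxz] at htri1; linarith
    have hs2 : ‖z - x₀‖ ≤ ε := by linarith
    have hs0 : 0 < ‖z - x₀‖ := lt_of_lt_of_le (by positivity) hs1
    have hge := h z hs0 hs2
    have hmf : mfConvex f z ≤ ‖v‖ := by
      unfold mfConvex
      exact csInf_le ⟨0, by rintro a ⟨w, -, rfl⟩; exact norm_nonneg w⟩ ⟨v, hvmem, rfl⟩
    have hrpow : (r/2) ^ (α-1) ≤ ‖z - x₀‖ ^ (α-1) :=
      Real.rpow_le_rpow (by positivity) hs1 (by linarith)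
    have hchain : c * (r/2)^(α-1) ≤ 6 * Δ / r := by
      calc c * (r/2)^(α-1) ≤ c * ‖z - x₀‖^(α-1) :=
            mul_le_mul_of_nonneg_left hrpow hc.le
        _ ≤ mfConvex f z := hge
        _ ≤ ‖v‖ := hmf
        _ ≤ 6 * Δ / r := hvbound
    have hr2 : ((r/2:ℝ))^(α-1) = r^(α-1) / 2^(α-1) :=
      Real.div_rpow (le_of_lt hrpos) (by norm_num : (0:ℝ) ≤ 2) (α - 1)
    have hra : r^(α-1) = r^α / r := by
      rw [Real.rpow_sub hrpos, Real.rpow_one]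
    have hrapos : 0 < r ^ α := Real.rpow_pos_of_pos hrpos α
    rw [hr2, hra] at hchain
    have hfinal : c / (6 * 2^(α-1)) * r^α ≤ Δ := by
      set P := (2:ℝ) ^ (α - 1) with hPdef
      set R := r ^ α with hRdef
      rw [show c * (R / r / P) = c * R / (r * P) by ring,
        div_le_div_iff₀ (mul_pos hrpos h2) hrpos] at hchain
      rw [div_mul_eq_mul_div, div_le_iff₀ (by linarith : (0:ℝ) < 6 * P)]
      nlinarith [hchain, hrpos, h2, hrapos]
    rw [hΔdef] at hfinal
    linarith
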